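/- Let V be a vector space with basis {x_1,...,x_n}, σ a linear bijection of V, and w ∈ V^{⊗d} a twisted superpotential with respect to σ such that w = Σ_i x_i ⊗ y_i with y_1,...,y_n ∈ V^{⊗(d-1)} linearly independent. Let ŵ = Σ_{i=0}^{d}(-1)^i τ_{d+1}^i(id⊗σ^{⊗i}⊗id^{⊗(d-i)})(z⊗w) ∈ (V⊕kz)^{⊗(d+1)}. Then the span of the partial derivatives ∂_Ψ(ŵ) = (id⊗id⊗Ψ)(ŵ) over all Ψ ∈ (V*)^{⊗(d-1)} equals span{z⊗x_i - σ(x_i)⊗z : i = 1,...,n} inside (V⊕kz)⊗(V⊕kz). -/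

import Mathlib

/-- Coefficient model of `V^{⊗d}` for `V = k^n` with its standard basis:
a tensor is given by its coefficient function on `d`-tuples of basis indices. -/
abbrev Tens (k : Type*) (n d : ℕ) := (Fin d → Fin n) → k

/-- The linear map on `V^{⊗d}` permuting the tensor factors according to `s`. -/
def permMap (k : Type*) [Field k] (n d : ℕ) (s : Equiv.Perm (Fin d)) :
    Tens k n d →ₗ[k] Tens k n d where
  toFun w := fun i => w (i ∘ s)
  map_add' _ _ := rfl
  map_smul' _ _ := rfl

/-- The swap `τ` of the adjacent tensor factors at positions `j, j+1`
(the identity if out of range). -/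
def adjSwap (d j : ℕ) : Equiv.Perm (Fin d) :=
  if h : j + 1 < d then Equiv.swap ⟨j, Nat.lt_of_succ_lt h⟩ ⟨j + 1, h⟩ else 1

/-- `tauMapFrom k n d a m` is `1^{⊗a} ⊗ τ_{d-a}^{m}` acting on `V^{⊗d}`, defined
recursively as in the paper: `τ^0 = id`, `τ^1 = τ⊗1⋯`, and
`τ^{m+1} = (1^{⊗(a+m)} ⊗ τ ⊗ 1^{⋯}) ∘ τ^m` (swap at positions `a+m, a+m+1`).
In particular `tauMapFrom k n d 0 m = τ_d^m`. -/
def tauMapFrom (k : Type*) [Field k] (n d a : ℕ) : ℕ → (Tens k n d →ₗ[k] Tens k n d)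
  | 0 => LinearMap.id
  | (m + 1) => (permMap k n d (adjSwap d (a + m))).comp (tauMapFrom k n d a m)

/-- `blockMap k n d S P` applies the matrix `S` (an endomorphism of `V = k^n` in the
standard basis, `σ(e_j) = Σ_i S i j e_i`) to every tensor factor at a position
satisfying `P`, and the identity to all other factors.  E.g. `P = (· = 0)` gives
`σ ⊗ 1^{⊗(d-1)}` and `P = ⊤` gives `σ^{⊗d}`. -/
noncomputable def blockMap (k : Type*) [Field k] (n d : ℕ)
    (S : Matrix (Fin n) (Fin n) k) (P : Fin d → Prop) [DecidablePred P] :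
    Tens k n d →ₗ[k] Tens k n d where
  toFun w := fun i => ∑ j : Fin d → Fin n,
    (∏ p, if P p then S (i p) (j p) else if i p = j p then 1 else 0) * w j
  map_add' w₁ w₂ := by
    funext i
    simp [mul_add, Finset.sum_add_distrib]
  map_smul' c w := by
    funext i
    simp only [Pi.smul_apply, smul_eq_mul, RingHom.id_apply]
    rw [Finset.mul_sum]
    exact Finset.sum_congr rfl fun j _ => by ring

/-- Extension of the matrix of `σ : V → V` to `V̂ = kz ⊕ V`, acting as the identity on
the new basis vector `z` (index `0`) and as `σ` on `V` (indices `1,…,n`). -/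
noncomputable def extMatrix (k : Type*) [Field k] (n : ℕ) (S : Matrix (Fin n) (Fin n) k) :
    Matrix (Fin (n + 1)) (Fin (n + 1)) k :=
  Matrix.of (Fin.cases (motive := fun _ => Fin (n + 1) → k)
    (Fin.cons 1 (fun _ => 0)) (fun a => Fin.cons 0 (fun b => S a b)))

/-- The element `z ⊗ w ∈ V̂^{⊗(d+1)}` for `w ∈ V^{⊗d}`, where `V̂ = kz ⊕ V`,
`z` is the basis vector with index `0` and `V` embeds via `Fin.succ`. -/
noncomputable def zTensor (k : Type*) [Field k] (n d : ℕ) (w : Tens k n d) :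
    Tens k (n + 1) (d + 1) :=
  fun i => (if i 0 = 0 then (1 : k) else 0) *
    ∑ j : Fin d → Fin n, (∏ p, if i p.succ = (j p).succ then (1 : k) else 0) * w j


namespace Stmt12
open Finset

variable {k : Type*} [Field k]

lemma blockMap_apply {n d : ℕ} (S : Matrix (Fin n) (Fin n) k) (P : Fin d → Prop)
    [DecidablePred P] (Y : Tens k n d) (i : Fin d → Fin n) :
    blockMap k n d S P Y i = ∑ j : Fin d → Fin n,
      (∏ p, if P p then S (i p) (j p) else if i p = j p then 1 else 0) * Y j := rfl

lemma prod_delta {ι α : Type*} [Fintype ι] [DecidableEq α] [DecidableEq (ι → α)]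
    (f g : ι → α) :
    (∏ p, if f p = g p then (1 : k) else 0) = if f = g then 1 else 0 := by
  by_cases h : f = g
  · simp [h]
  · obtain ⟨p, hp⟩ := Function.ne_iff.1 h
    rw [if_neg h]
    exact Finset.prod_eq_zero (Finset.mem_univ p) (if_neg hp)

lemma sum_delta_mul {ι : Type*} [Fintype ι] [DecidableEq ι] (c : ι) (w : ι → k) :
    ∑ j, (if j = c then (1 : k) else 0) * w j = w c := by
  simp [ite_mul]

lemma ite_one_mul_ite {P Q : Prop} [Decidable P] [Decidable Q] (r : k) :
    (if P then (1 : k) else 0) * (if Q then r else 0) = if P ∧ Q then r else 0 := by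
  by_cases hP : P <;> by_cases hQ : Q <;> simp [hP, hQ]

/-- sum over functions into `Fin (N+1)`, all values nonzero -/
lemma sum_succ_comp {N d : ℕ} (F : (Fin d → Fin (N + 1)) → k)
    (hF : ∀ j p, j p = 0 → F j = 0) :
    ∑ j : Fin d → Fin (N + 1), F j = ∑ j' : Fin d → Fin N, F (fun p => (j' p).succ) := by
  classical
  rw [← Finset.sum_filter_of_ne (p := fun j : Fin d → Fin (N + 1) => ∀ p, j p ≠ 0)
    (fun j _ hj => by
      intro p hp
      exact hj (hF j p hp))]
  refine (Finset.sum_bij' (fun j hj => fun p => (j p).pred (by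
      simp only [Finset.mem_filter] at hj; exact hj.2 p))
    (fun j' _ => fun p => (j' p).succ) ?_ ?_ ?_ ?_ ?_).symm.symm
  · intro j hj
    exact Finset.mem_univ _
  · intro j' _
    simp [Fin.succ_ne_zero]
  · intro j hj
    funext p
    simp [Fin.succ_pred]
  · intro j' _
    funext p
    simp [Fin.pred_succ]
  · intro j hj
    congr 1
    funext p
    simp [Fin.succ_pred]

/-- split a sum over `Fin (d+1) → Fin N` along `Fin.cons` -/
lemma sum_pi_cons {N d : ℕ} (F : (Fin (d + 1) → Fin N) → k) :
    ∑ j : Fin (d + 1) → Fin N, F j = ∑ c : Fin N, ∑ jr : Fin d → Fin N, F (Fin.cons c jr) := by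
  rw [← Equiv.sum_comp (Fin.consEquiv (fun _ => Fin N)) F, Fintype.sum_prod_type]
  rfl

end Stmt12
namespace Stmt12
open Finset

variable {k : Type*} [Field k]

def cyc (d : ℕ) : ℕ → Equiv.Perm (Fin d)
  | 0 => 1
  | m + 1 => adjSwap d m * cyc d m

lemma tauMapFrom_eval {N d : ℕ} (m : ℕ) (Y : Tens k N d) (i : Fin d → Fin N) :
    tauMapFrom k N d 0 m Y i = Y (i ∘ cyc d m) := by
  induction m generalizing i with
  | zero => simp [tauMapFrom, cyc]
  | succ m ih =>
      show (tauMapFrom k N d 0 m Y) (i ∘ (adjSwap d (0 + m))) = _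
      rw [ih]
      congr 1
      funext p
      simp [cyc, Function.comp, Nat.zero_add]

lemma cyc_apply_zero {d : ℕ} (m : ℕ) (hm : m < d) :
    cyc d m ⟨0, Nat.lt_of_le_of_lt (Nat.zero_le m) hm⟩ = ⟨m, hm⟩ := by
  induction m with
  | zero => rfl
  | succ m ih =>
      have hm' : m < d := Nat.lt_of_succ_lt hm
      show adjSwap d m (cyc d m ⟨0, _⟩) = _
      rw [ih hm']
      unfold adjSwap
      rw [dif_pos hm]
      exact Equiv.swap_apply_left _ _


variable {n e : ℕ}

/-- `blockMap ∘ zTensor` vanishes when the first index is nonzero, if `P 0` is false. -/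
lemma blockMap_zT_vanish (S : Matrix (Fin n) (Fin n) k) (w : Tens k n (e + 2))
    (P : Fin (e + 3) → Prop) [DecidablePred P] (hP : ¬ P 0)
    (i : Fin (e + 3) → Fin (n + 1)) (hi : i 0 ≠ 0) :
    blockMap k (n + 1) (e + 3) (extMatrix k n S) P (zTensor k n (e + 2) w) i = 0 := by
  rw [blockMap_apply]
  apply Finset.sum_eq_zero
  intro j _
  by_cases hj : j 0 = 0
  · refine mul_eq_zero_of_left (Finset.prod_eq_zero (Finset.mem_univ 0) ?_) _
    rw [if_neg hP, if_neg (fun h => hi (h.trans hj))]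
  · refine mul_eq_zero_of_right _ ?_
    unfold zTensor
    rw [if_neg hj, zero_mul]

lemma zT_eq (w : Tens k n (e + 2)) (j : Fin (e + 3) → Fin (n + 1)) :
    zTensor k n (e + 2) w j = ∑ jc : Fin (e + 2) → Fin n,
      (if j = Fin.cons 0 (fun p => (jc p).succ) then (1 : k) else 0) * w jc := by
  unfold zTensor
  rw [Finset.mul_sum]
  refine Finset.sum_congr rfl fun jc _ => ?_
  rw [← mul_assoc]
  congr 1
  by_cases h : j = Fin.cons 0 (fun p => (jc p).succ)
  · subst h
    simp [Fin.cons_succ]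
  · rw [if_neg h]
    by_cases h0 : j 0 = 0
    · rw [if_pos h0, one_mul]
      have : ∃ p, j p.succ ≠ (jc p).succ := by
        by_contra hc
        push_neg at hc
        apply h
        funext p
        refine Fin.cases ?_ ?_ p
        · exact h0
        · intro q; rw [hc q]; simp [Fin.cons_succ]
      obtain ⟨p, hp⟩ := this
      exact Finset.prod_eq_zero (Finset.mem_univ p) (if_neg hp)
    · rw [if_neg h0, zero_mul]


/-- The standard index `(a, b, succ∘j')`. -/
def I2 {n e : ℕ} (a b : Fin (n + 1)) (j' : Fin (e + 1) → Fin n) : Fin (e + 3) → Fin (n + 1) :=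
  Fin.cons a (Fin.cons b (fun q => (j' q).succ))

lemma I2_pos {a b : Fin (n + 1)} {j' : Fin (e + 1) → Fin n} (p : Fin (e + 3))
    (hp : 2 ≤ (p : ℕ)) : I2 a b j' p ≠ 0 := by
  obtain ⟨v, hv⟩ := p
  have hp' : 2 ≤ v := hp
  have h2 : v - 2 < e + 1 := by omega
  have : (⟨v, hv⟩ : Fin (e + 3)) = Fin.succ (Fin.succ ⟨v - 2, h2⟩) := by
    ext
    simp only [Fin.val_succ]
    omega
  rw [this]
  unfold I2
  rw [Fin.cons_succ, Fin.cons_succ]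
  exact Fin.succ_ne_zero _

lemma I2_cond (a b : Fin (n + 1)) (j' : Fin (e + 1) → Fin n) (c : Fin n)
    (jr : Fin (e + 1) → Fin n) :
    (I2 a b j' = Fin.cons 0 (fun p => ((Fin.cons c jr : Fin (e + 2) → Fin n) p).succ))
      ↔ (a = 0 ∧ b = Fin.succ c ∧ jr = j') := by
  have hfun : (fun p => ((Fin.cons c jr : Fin (e + 2) → Fin n) p).succ)
      = Fin.cons (Fin.succ c) (fun q => (jr q).succ) := by
    funext p
    refine Fin.cases ?_ ?_ p <;> simp [Fin.cons_succ]
  rw [hfun]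
  unfold I2
  rw [Fin.cons_inj, Fin.cons_inj]
  have hlast : ((fun q => (j' q).succ) = fun q => (jr q).succ) ↔ jr = j' := by
    constructor
    · intro h
      funext q
      exact (Fin.succ_injective _ (congrFun h q)).symm
    · intro h
      rw [h]
  rw [hlast]

lemma zT_eval (w : Tens k n (e + 2)) (a b : Fin (n + 1)) (j' : Fin (e + 1) → Fin n) :
    zTensor k n (e + 2) w (I2 a b j') =
      (if a = 0 then (1 : k) else 0) *
        ∑ c : Fin n, (if b = Fin.succ c then (1 : k) else 0) * w (Fin.cons c j') := by
  rw [zT_eq, sum_pi_cons, Finset.mul_sum]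
  refine Finset.sum_congr rfl fun c _ => ?_
  have : ∀ jr : Fin (e + 1) → Fin n,
      (if I2 a b j' = Fin.cons 0 (fun p => ((Fin.cons c jr : Fin (e + 2) → Fin n) p).succ)
        then (1 : k) else 0)
      = if a = 0 ∧ b = Fin.succ c ∧ jr = j' then (1 : k) else 0 := by
    intro jr
    simp only [I2_cond]
  simp only [this]
  by_cases ha : a = 0 <;> by_cases hb : b = Fin.succ c <;> simp [ha, hb]


lemma B1_eval (S : Matrix (Fin n) (Fin n) k) (w : Tens k n (e + 2))
    (a b : Fin (n + 1)) (j' : Fin (e + 1) → Fin n) :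
    blockMap k (n + 1) (e + 3) (extMatrix k n S)
        (fun p => 1 ≤ (p : ℕ) ∧ (p : ℕ) ≤ 1) (zTensor k n (e + 2) w) (I2 b a j')
      = (if b = 0 then (1 : k) else 0) *
          ∑ c : Fin n, extMatrix k n S a (Fin.succ c) * w (Fin.cons c j') := by
  rw [blockMap_apply]
  simp only [zT_eq]
  -- push product inside, swap sums, collapse the `j`-sum against the delta
  have step1 : ∀ j : Fin (e + 3) → Fin (n + 1),
      (∏ p : Fin (e+3), if 1 ≤ (p : ℕ) ∧ (p : ℕ) ≤ 1 then extMatrix k n S (I2 b a j' p) (j p)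
          else if I2 b a j' p = j p then (1 : k) else 0) *
        (∑ jc : Fin (e + 2) → Fin n,
          (if j = Fin.cons 0 (fun p => (jc p).succ) then (1 : k) else 0) * w jc)
      = ∑ jc : Fin (e + 2) → Fin n,
          (if j = Fin.cons 0 (fun p => (jc p).succ) then (1 : k) else 0) *
          ((∏ p : Fin (e+3), if 1 ≤ (p : ℕ) ∧ (p : ℕ) ≤ 1 then extMatrix k n S (I2 b a j' p) (j p)
            else if I2 b a j' p = j p then (1 : k) else 0) * w jc) := by
    intro j
    rw [Finset.mul_sum]
    exact Finset.sum_congr rfl fun jc _ => by ring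
  simp only [step1]
  rw [Finset.sum_comm]
  have step2 : ∀ jc : Fin (e + 2) → Fin n,
      (∑ j : Fin (e + 3) → Fin (n + 1),
        (if j = Fin.cons 0 (fun p => (jc p).succ) then (1 : k) else 0) *
          ((∏ p : Fin (e+3), if 1 ≤ (p : ℕ) ∧ (p : ℕ) ≤ 1 then extMatrix k n S (I2 b a j' p) (j p)
            else if I2 b a j' p = j p then (1 : k) else 0) * w jc))
      = (∏ p : Fin (e+3), if 1 ≤ (p : ℕ) ∧ (p : ℕ) ≤ 1
            then extMatrix k n S (I2 b a j' p) ((Fin.cons 0 (fun p => (jc p).succ) : Fin (e+3) → Fin (n+1)) p)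
            else if I2 b a j' p = (Fin.cons 0 (fun p => (jc p).succ) : Fin (e+3) → Fin (n+1)) p then (1 : k) else 0) * w jc :=
    fun jc => sum_delta_mul _ _
  simp only [step2]
  -- now compute the product
  have step3 : ∀ jc : Fin (e + 2) → Fin n,
      (∏ p : Fin (e+3), if 1 ≤ (p : ℕ) ∧ (p : ℕ) ≤ 1
            then extMatrix k n S (I2 b a j' p) ((Fin.cons 0 (fun p => (jc p).succ) : Fin (e+3) → Fin (n+1)) p)
            else if I2 b a j' p = (Fin.cons 0 (fun p => (jc p).succ) : Fin (e+3) → Fin (n+1)) p then (1 : k) else 0)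
      = (if b = 0 then (1 : k) else 0) * (extMatrix k n S a (Fin.succ (jc 0)) *
          ∏ q : Fin (e + 1), if j' q = jc q.succ then (1 : k) else 0) := by
    intro jc
    rw [Fin.prod_univ_succ, Fin.prod_univ_succ]
    unfold I2
    simp only [Fin.cons_zero, Fin.cons_succ, Fin.val_zero, Fin.val_succ, Fin.succ_inj]
    norm_num
  simp only [step3]
  -- split jc = cons c jr and collapse jr
  rw [sum_pi_cons]
  rw [Finset.mul_sum]
  refine Finset.sum_congr rfl fun c _ => ?_
  simp only [Fin.cons_zero, Fin.cons_succ]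
  simp only [prod_delta]
  by_cases hb : b = 0 <;> simp [hb, mul_ite, ite_mul, Finset.sum_ite_eq]


lemma blockMap_id {N d : ℕ} (M : Matrix (Fin N) (Fin N) k) (P : Fin d → Prop)
    [DecidablePred P] (hP : ∀ p, ¬ P p) (Y : Tens k N d) :
    blockMap k N d M P Y = Y := by
  funext i
  rw [blockMap_apply]
  have : ∀ j : Fin d → Fin N,
      (∏ p, if P p then M (i p) (j p) else if i p = j p then (1 : k) else 0)
        = if i = j then (1 : k) else 0 := by
    intro j
    rw [← prod_delta i j]
    exact Finset.prod_congr rfl fun p _ => if_neg (hP p)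
  simp only [this]
  simp [ite_mul, Finset.sum_ite_eq]

lemma I2_swap (a b : Fin (n + 1)) (j' : Fin (e + 1) → Fin n) :
    (fun p => I2 a b j' (adjSwap (e + 3) 0 p)) = I2 b a j' := by
  have h01 : (0 : ℕ) + 1 < e + 3 := by omega
  funext p
  unfold adjSwap
  rw [dif_pos h01]
  obtain ⟨v, hv⟩ := p
  unfold I2
  match v, hv with
  | 0, hv => simp [Equiv.swap_apply_def, Fin.ext_iff]
  | 1, hv => simp [Equiv.swap_apply_def, Fin.ext_iff]
  | (v + 2), hv =>
      rw [Equiv.swap_apply_of_ne_of_ne (by simp [Fin.ext_iff]) (by simp [Fin.ext_iff])]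
      have hv' : v < e + 1 := by omega
      rw [show (⟨v + 2, hv⟩ : Fin (e + 3)) = Fin.succ (Fin.succ ⟨v, hv'⟩) from by
        ext; simp]
      rw [Fin.cons_succ, Fin.cons_succ, Fin.cons_succ, Fin.cons_succ]

lemma what_eval (S : Matrix (Fin n) (Fin n) k) (w : Tens k n (e + 2))
    (a b : Fin (n + 1)) (j' : Fin (e + 1) → Fin n) :
    (∑ m ∈ Finset.range (e + 3), ((-1 : k) ^ m) •
      tauMapFrom k (n + 1) (e + 3) 0 m
        (blockMap k (n + 1) (e + 3) (extMatrix k n S)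
          (fun p => 1 ≤ (p : ℕ) ∧ (p : ℕ) ≤ m) (zTensor k n (e + 2) w))) (I2 a b j')
    = (if a = 0 then (1 : k) else 0) *
        (∑ c : Fin n, (if b = Fin.succ c then (1 : k) else 0) * w (Fin.cons c j'))
      - (if b = 0 then (1 : k) else 0) *
        (∑ c : Fin n, extMatrix k n S a (Fin.succ c) * w (Fin.cons c j')) := by
  rw [Finset.sum_apply]
  have key : ∀ m ∈ Finset.range (e + 3),
      (((-1 : k) ^ m) • tauMapFrom k (n + 1) (e + 3) 0 m
        (blockMap k (n + 1) (e + 3) (extMatrix k n S)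
          (fun p => 1 ≤ (p : ℕ) ∧ (p : ℕ) ≤ m) (zTensor k n (e + 2) w))) (I2 a b j')
      = ((-1 : k) ^ m) * (blockMap k (n + 1) (e + 3) (extMatrix k n S)
          (fun p => 1 ≤ (p : ℕ) ∧ (p : ℕ) ≤ m) (zTensor k n (e + 2) w))
            (fun p => I2 a b j' (cyc (e + 3) m p)) := by
    intro m _
    rw [Pi.smul_apply, tauMapFrom_eval, smul_eq_mul]
    rfl
  rw [Finset.sum_congr rfl key]
  rw [Finset.sum_range_succ', Finset.sum_range_succ']
  -- the terms for m ≥ 2 vanish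
  have hvanish : ∀ i ∈ Finset.range (e + 1),
      ((-1 : k) ^ (i + 1 + 1)) * (blockMap k (n + 1) (e + 3) (extMatrix k n S)
          (fun p => 1 ≤ (p : ℕ) ∧ (p : ℕ) ≤ i + 1 + 1) (zTensor k n (e + 2) w))
            (fun p => I2 a b j' (cyc (e + 3) (i + 1 + 1) p)) = 0 := by
    intro i hi
    rw [Finset.mem_range] at hi
    have hm : i + 1 + 1 < e + 3 := by omega
    refine mul_eq_zero_of_right _ (blockMap_zT_vanish S w _ (by simp) _ ?_)
    have h0 : (0 : Fin (e + 3)) = ⟨0, Nat.lt_of_le_of_lt (Nat.zero_le _) hm⟩ := rfl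
    rw [h0, cyc_apply_zero _ hm]
    exact I2_pos _ (by simp)
  rw [Finset.sum_congr rfl hvanish, Finset.sum_const_zero, zero_add]
  -- m = 0 term
  have h0 : ((-1 : k) ^ 0) * (blockMap k (n + 1) (e + 3) (extMatrix k n S)
      (fun p => 1 ≤ (p : ℕ) ∧ (p : ℕ) ≤ 0) (zTensor k n (e + 2) w))
        (fun p => I2 a b j' (cyc (e + 3) 0 p)) =
      (if a = 0 then (1 : k) else 0) *
        ∑ c : Fin n, (if b = Fin.succ c then (1 : k) else 0) * w (Fin.cons c j') := by
    rw [pow_zero, one_mul]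
    rw [blockMap_id _ _ (fun p => by omega) _]
    rw [show (fun p => I2 a b j' (cyc (e + 3) 0 p)) = I2 a b j' from rfl]
    exact zT_eval w a b j'
  -- m = 1 term
  have h1 : ((-1 : k) ^ (0 + 1)) * (blockMap k (n + 1) (e + 3) (extMatrix k n S)
      (fun p => 1 ≤ (p : ℕ) ∧ (p : ℕ) ≤ 0 + 1) (zTensor k n (e + 2) w))
        (fun p => I2 a b j' (cyc (e + 3) (0 + 1) p)) =
      - ((if b = 0 then (1 : k) else 0) *
        ∑ c : Fin n, extMatrix k n S a (Fin.succ c) * w (Fin.cons c j')) := by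
    rw [pow_one]
    have hc : (fun p => I2 a b j' (cyc (e + 3) (0 + 1) p)) = I2 b a j' := by
      rw [show cyc (e + 3) (0 + 1) = adjSwap (e + 3) 0 * cyc (e + 3) 0 from rfl]
      rw [show cyc (e + 3) 0 = 1 from rfl, mul_one]
      exact I2_swap a b j'
    rw [hc]
    have hB : (blockMap k (n + 1) (e + 3) (extMatrix k n S)
        (fun p => 1 ≤ (p : ℕ) ∧ (p : ℕ) ≤ 0 + 1) (zTensor k n (e + 2) w)) (I2 b a j')
        = (if b = 0 then (1 : k) else 0) *
          ∑ c : Fin n, extMatrix k n S a (Fin.succ c) * w (Fin.cons c j') :=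
      B1_eval S w a b j'
    rw [hB]
    ring
  rw [h0, h1]
  ring


lemma extMatrix_zero_succ (S : Matrix (Fin n) (Fin n) k) (c : Fin n) :
    extMatrix k n S 0 (Fin.succ c) = 0 := by
  simp [extMatrix]

lemma extMatrix_succ_succ (S : Matrix (Fin n) (Fin n) k) (t c : Fin n) :
    extMatrix k n S (Fin.succ t) (Fin.succ c) = S t c := by
  simp [extMatrix]

lemma E_succ (S : Matrix (Fin n) (Fin n) k) (a : Fin (n + 1)) (c : Fin n) :
    extMatrix k n S a (Fin.succ c) = ∑ t : Fin n, (if a = Fin.succ t then (1 : k) else 0) * S t c := by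
  refine Fin.cases ?_ ?_ a
  · rw [extMatrix_zero_succ]
    symm
    refine Finset.sum_eq_zero fun t _ => ?_
    rw [if_neg (fun h => Fin.succ_ne_zero t h.symm), zero_mul]
  · intro t0
    rw [extMatrix_succ_succ]
    simp [Fin.succ_inj, ite_mul, Finset.sum_ite_eq]

/-- The generators `z ⊗ x_i − σ(x_i) ⊗ z`. -/
def vgen (S : Matrix (Fin n) (Fin n) k) (i : Fin n) : Tens k (n + 1) 2 :=
  fun idx : Fin 2 → Fin (n + 1) =>
    (if idx 0 = 0 ∧ idx 1 = Fin.succ i then (1 : k) else 0)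
      - ∑ a : Fin n, S a i * (if idx 0 = Fin.succ a ∧ idx 1 = 0 then (1 : k) else 0)

/-- The key computation: each partial derivative is the corresponding combination
of the generators. -/
lemma deriv_eq (S : Matrix (Fin n) (Fin n) k) (w : Tens k n (e + 2))
    (what : Tens k (n + 1) (e + 3))
    (hW : ∀ a b (j' : Fin (e + 1) → Fin n), what (I2 a b j')
      = (if a = 0 then (1 : k) else 0) *
          (∑ c : Fin n, (if b = Fin.succ c then (1 : k) else 0) * w (Fin.cons c j'))
        - (if b = 0 then (1 : k) else 0) *
          (∑ c : Fin n, extMatrix k n S a (Fin.succ c) * w (Fin.cons c j')))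
    (ps : Fin (e + 1) → (Fin n → k)) :
    (fun idx : Fin 2 → Fin (n + 1) => ∑ j : Fin (e + 1) → Fin (n + 1),
        (∏ p, Fin.cons (α := fun _ => k) (0 : k) (ps p) (j p)) *
          what (Fin.cons (idx 0) (Fin.cons (idx 1) j)))
      = ∑ i : Fin n, (∑ j' : Fin (e + 1) → Fin n,
          (∏ p, ps p (j' p)) * w (Fin.cons i j')) • vgen S i := by
  funext idx
  rw [sum_succ_comp _ (fun j p hp => by
    refine mul_eq_zero_of_left (Finset.prod_eq_zero (Finset.mem_univ p) ?_) _
    rw [hp, Fin.cons_zero])]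
  have hprod : ∀ j' : Fin (e + 1) → Fin n,
      (∏ p, Fin.cons (α := fun _ => k) (0 : k) (ps p) ((j' p).succ)) = ∏ p, ps p (j' p) :=
    fun j' => Finset.prod_congr rfl fun p _ => by rw [Fin.cons_succ]
  have hWW : ∀ j' : Fin (e + 1) → Fin n,
      what (Fin.cons (idx 0) (Fin.cons (idx 1) (fun p => (j' p).succ)))
      = (if idx 0 = 0 then (1 : k) else 0) *
          (∑ c : Fin n, (if idx 1 = Fin.succ c then (1 : k) else 0) * w (Fin.cons c j'))
        - (if idx 1 = 0 then (1 : k) else 0) *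
          (∑ c : Fin n, extMatrix k n S (idx 0) (Fin.succ c) * w (Fin.cons c j')) :=
    fun j' => hW (idx 0) (idx 1) j'
  simp only [hprod, hWW]
  rw [Finset.sum_apply]
  have hrhs : ∀ i : Fin n,
      ((∑ j' : Fin (e + 1) → Fin n, (∏ p, ps p (j' p)) * w (Fin.cons i j')) • vgen S i) idx
      = ∑ j' : Fin (e + 1) → Fin n, (∏ p, ps p (j' p)) * (w (Fin.cons i j') * vgen S i idx) := by
    intro i
    rw [Pi.smul_apply, smul_eq_mul, Finset.sum_mul]
    exact Finset.sum_congr rfl fun j' _ => by ring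
  simp only [hrhs]
  rw [Finset.sum_comm]
  refine Finset.sum_congr rfl fun j' _ => ?_
  rw [← Finset.mul_sum]
  congr 1
  unfold vgen
  by_cases ha : idx 0 = 0 <;> by_cases hb : idx 1 = 0
  · -- a = 0, b = 0
    simp only [ha, hb, if_pos rfl, one_mul]
    simp [Fin.succ_ne_zero, eq_comm, extMatrix_zero_succ]
  · -- a = 0, b ≠ 0
    simp only [ha, if_pos rfl, one_mul, if_neg hb, zero_mul, sub_zero]
    simp [extMatrix_zero_succ, hb, ite_mul]
  · -- a ≠ 0, b = 0
    simp only [E_succ, ha, hb, if_neg ha, if_pos rfl, zero_mul, zero_sub, one_mul,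
      false_and, and_true, if_false, Finset.sum_mul, ite_mul, mul_ite, mul_zero,
      mul_one, zero_mul]
    simp only [if_true, mul_neg, Finset.mul_sum, ← Finset.sum_neg_distrib]
    refine Finset.sum_congr rfl fun c _ => Finset.sum_congr rfl fun t _ => ?_
    by_cases hat : idx 0 = Fin.succ t <;> simp [hat] <;> ring
  · -- a ≠ 0, b ≠ 0
    simp [ha, hb]


lemma exists_dual {M : Type*} [AddCommGroup M] [Module k M] {ι : Type*} [DecidableEq ι]
    {y : ι → M} (hind : LinearIndependent k y) (l : ι) :
    ∃ g : M →ₗ[k] k, ∀ i, g (y i) = if i = l then 1 else 0 := by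
  obtain ⟨g, hg⟩ := LinearMap.exists_extend
    ((Finsupp.lapply l).comp hind.repr : ↥(Submodule.span k (Set.range y)) →ₗ[k] k)
  refine ⟨g, fun i => ?_⟩
  have hy : y i ∈ Submodule.span k (Set.range y) := Submodule.subset_span ⟨i, rfl⟩
  have h2 := LinearMap.congr_fun hg ⟨y i, hy⟩
  simp only [LinearMap.comp_apply, Submodule.coe_subtype] at h2
  rw [h2, hind.repr_eq_single i ⟨y i, hy⟩ rfl]
  simp [Finsupp.single_apply]

end Stmt12


/-- let `w ∈ V^{⊗(e+2)}` be a twisted superpotential with respect to `σ`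
(matrix `S`), written `w = Σ_i x_i ⊗ y_i` with the `y_i` linearly independent, and let
`ŵ ∈ V̂^{⊗(e+3)}` be the associated superpotential (`V̂ = kz ⊕ V`).  Then the span of
the partial derivatives `∂_Ψ(ŵ) = (1⊗1⊗Ψ)(ŵ)`, over all `Ψ ∈ (V^*)^{⊗(e+1)}`
(extended to `V̂^*` by `z ↦ 0`), equals the span of the elements
`z ⊗ x_i - σ(x_i) ⊗ z`, `i = 1,…,n`, inside `V̂ ⊗ V̂`. -/
theorem stmt12 (k : Type*) [Field k] (n e : ℕ)
    (S : Matrix (Fin n) (Fin n) k) (hS : IsUnit S.det)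
    (w : Tens k n (e + 2))
    (hw : w = ((-1 : k) ^ (e + 1)) •
      tauMapFrom k n (e + 2) 0 (e + 1) (blockMap k n (e + 2) S (fun p => (p : ℕ) = 0) w))
    (hind : LinearIndependent k
      (fun i : Fin n => (fun rest : Fin (e + 1) → Fin n => w (Fin.cons i rest))))
    (what : Tens k (n + 1) (e + 3))
    (hwhat : what = ∑ m ∈ Finset.range (e + 3), ((-1 : k) ^ m) •
      tauMapFrom k (n + 1) (e + 3) 0 m
        (blockMap k (n + 1) (e + 3) (extMatrix k n S)
          (fun p => 1 ≤ (p : ℕ) ∧ (p : ℕ) ≤ m) (zTensor k n (e + 2) w))) :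
    Submodule.span k {u : Tens k (n + 1) 2 | ∃ ps : Fin (e + 1) → (Fin n → k),
        u = fun idx => ∑ j : Fin (e + 1) → Fin (n + 1),
          (∏ p, Fin.cons (α := fun _ => k) (0 : k) (ps p) (j p)) *
            what (Fin.cons (idx 0) (Fin.cons (idx 1) j))}
      = Submodule.span k (Set.range (fun i : Fin n => (fun idx : Fin 2 → Fin (n + 1) =>
          (if idx 0 = 0 ∧ idx 1 = Fin.succ i then (1 : k) else 0)
            - ∑ a : Fin n, S a i *
                (if idx 0 = Fin.succ a ∧ idx 1 = 0 then (1 : k) else 0)))) := by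
  classical
  have hW : ∀ a b (j' : Fin (e + 1) → Fin n), what (Stmt12.I2 a b j')
      = (if a = 0 then (1 : k) else 0) *
          (∑ c : Fin n, (if b = Fin.succ c then (1 : k) else 0) * w (Fin.cons c j'))
        - (if b = 0 then (1 : k) else 0) *
          (∑ c : Fin n, extMatrix k n S a (Fin.succ c) * w (Fin.cons c j')) := by
    intro a b j'
    rw [hwhat]
    exact Stmt12.what_eval S w a b j'
  have hrange : (Set.range (fun i : Fin n => (fun idx : Fin 2 → Fin (n + 1) =>
      (if idx 0 = 0 ∧ idx 1 = Fin.succ i then (1 : k) else 0)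
        - ∑ a : Fin n, S a i * (if idx 0 = Fin.succ a ∧ idx 1 = 0 then (1 : k) else 0))))
      = Set.range (Stmt12.vgen S) := rfl
  rw [hrange]
  apply le_antisymm
  · rw [Submodule.span_le]
    rintro u ⟨ps, rfl⟩
    rw [Stmt12.deriv_eq S w what hW ps]
    exact Submodule.sum_mem _ fun i _ => Submodule.smul_mem _ _
      (Submodule.subset_span ⟨i, rfl⟩)
  · rw [Submodule.span_le]
    rintro v ⟨l, rfl⟩
    obtain ⟨g, hg⟩ := Stmt12.exists_dual hind l
    -- the pure-tensor delta functionals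
    set psd : (Fin (e + 1) → Fin n) → (Fin (e + 1) → (Fin n → k)) :=
      fun jj => fun p x => if jj p = x then 1 else 0 with hpsd
    have hu : ∀ jj : Fin (e + 1) → Fin n,
        (fun idx : Fin 2 → Fin (n + 1) => ∑ j : Fin (e + 1) → Fin (n + 1),
          (∏ p, Fin.cons (α := fun _ => k) (0 : k) (psd jj p) (j p)) *
            what (Fin.cons (idx 0) (Fin.cons (idx 1) j)))
        = ∑ i : Fin n, w (Fin.cons i jj) • Stmt12.vgen S i := by
      intro jj
      rw [Stmt12.deriv_eq S w what hW (psd jj)]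
      refine Finset.sum_congr rfl fun i _ => ?_
      congr 1
      have : ∀ j' : Fin (e + 1) → Fin n,
          (∏ p, psd jj p (j' p)) = if j' = jj then (1 : k) else 0 := by
        intro j'
        rw [show (∏ p, psd jj p (j' p)) = ∏ p, if jj p = j' p then (1:k) else 0 from rfl,
          Stmt12.prod_delta jj j']
        by_cases h : jj = j'
        · simp [h]
        · rw [if_neg h, if_neg (fun hh => h hh.symm)]
      simp only [this]
      exact Stmt12.sum_delta_mul jj _
    have hv : Stmt12.vgen S l = ∑ jj : Fin (e + 1) → Fin n,
        (g (fun j => if jj = j then 1 else 0)) •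
          (fun idx : Fin 2 → Fin (n + 1) => ∑ j : Fin (e + 1) → Fin (n + 1),
            (∏ p, Fin.cons (α := fun _ => k) (0 : k) (psd jj p) (j p)) *
              what (Fin.cons (idx 0) (Fin.cons (idx 1) j))) := by
      simp only [hu]
      have h1 : ∀ jj : Fin (e + 1) → Fin n,
          (g (fun j => if jj = j then 1 else 0)) •
            (∑ i : Fin n, w (Fin.cons i jj) • Stmt12.vgen S i)
          = ∑ i : Fin n, (w (Fin.cons i jj) * g (fun j => if jj = j then 1 else 0)) •
              Stmt12.vgen S i := by
        intro jj
        rw [Finset.smul_sum]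
        exact Finset.sum_congr rfl fun i _ => by rw [smul_smul, mul_comm]
      simp only [h1]
      rw [Finset.sum_comm]
      have h2 : ∀ i : Fin n,
          (∑ jj : Fin (e + 1) → Fin n,
            (w (Fin.cons i jj) * g (fun j => if jj = j then 1 else 0)) • Stmt12.vgen S i)
          = (g (fun rest => w (Fin.cons i rest))) • Stmt12.vgen S i := by
        intro i
        rw [← Finset.sum_smul]
        congr 1
        rw [LinearMap.pi_apply_eq_sum_univ g (fun rest => w (Fin.cons i rest))]
        exact Finset.sum_congr rfl fun jj _ => by rw [smul_eq_mul]
      simp only [h2, hg]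
      simp [ite_smul, Finset.sum_ite_eq']
    show Stmt12.vgen S l ∈ _
    rw [hv]
    exact Submodule.sum_mem _ fun jj _ => Submodule.smul_mem _ _
      (Submodule.subset_span ⟨psd jj, rfl⟩)
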